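/- Let X(t), t ∈ ℝ^d, be a centered stationary random field with spectral density v satisfying v(t) ≤ B/(1+|t|²)^p for some p > d/2. Then the intrinsic pseudometric d_X(t₁,t₂)² = Var(X(t₁) − X(t₂)) satisfies: (i) if 2p > d+2, d_X(t₁,t₂) ≤ C|t₁−t₂|; (ii) if 2p = d+2, d_X(t₁,t₂)² ≤ C|t₁−t₂|²·(log(1/|t₁−t₂|) ∨ 1); (iii) if d < 2p < d+2, d_X(t₁,t₂)² ≤ C|t₁−t₂|^{2p−d}; where C depends only on B, p, d. Moreover, the d_X-diameter of any set is bounded: sup_t Var(X(t)) = ∫_{ℝ^d} v(s) ds ≤ C'. -/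

import Mathlib

open MeasureTheory Set
open scoped RealInnerProductSpace

namespace Stmt19Aux


private noncomputable def phi (k : ℕ) (p : ℝ) (r : ℝ) : ℝ := r ^ k * (1 + r ^ 2) ^ (-p)

private lemma phi_cont (k : ℕ) (p : ℝ) : Continuous (phi k p) :=
  (continuous_pow k).mul <|
    Continuous.rpow_const (by continuity) (fun x => Or.inl (by positivity))

private lemma phi_nonneg (k : ℕ) (p : ℝ) {r : ℝ} (hr : 0 ≤ r) : 0 ≤ phi k p r := by
  unfold phi; positivity

private lemma phi_le_pow (k : ℕ) {p : ℝ} (hp : 0 ≤ p) {r : ℝ} (hr : 0 ≤ r) :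
    phi k p r ≤ r ^ k := by
  unfold phi
  calc r ^ k * (1 + r ^ 2) ^ (-p) ≤ r ^ k * 1 := by
        gcongr
        exact Real.rpow_le_one_of_one_le_of_nonpos (by nlinarith) (by linarith)
    _ = r ^ k := mul_one _

private lemma phi_le_rpow (k : ℕ) {p : ℝ} (hp : 0 ≤ p) {r : ℝ} (hr : 1 ≤ r) :
    phi k p r ≤ r ^ ((k : ℝ) - 2 * p) := by
  have hr0 : (0:ℝ) < r := lt_of_lt_of_le one_pos hr
  have h1 : (1 + r ^ 2 : ℝ) ^ (-p) ≤ ((r : ℝ) ^ 2) ^ (-p) :=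
    Real.rpow_le_rpow_of_nonpos (by positivity) (by nlinarith) (by linarith)
  have h2 : ((r : ℝ) ^ 2) ^ (-p) = r ^ (2 * (-p)) := by
    rw [← Real.rpow_natCast r 2, ← Real.rpow_mul hr0.le]
    norm_num
  unfold phi
  calc r ^ k * (1 + r ^ 2) ^ (-p) ≤ r ^ k * r ^ (2 * (-p)) := by
        rw [← h2]; gcongr
    _ = r ^ ((k : ℝ) + 2 * (-p)) := by
        rw [← Real.rpow_natCast r k, ← Real.rpow_add hr0]
    _ = r ^ ((k : ℝ) - 2 * p) := by ring_nf

private lemma head_intOn (k : ℕ) (p : ℝ) : IntegrableOn (phi k p) (Ioc (0:ℝ) 1) :=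
  (phi_cont k p).integrableOn_Ioc

private lemma head_bound (k : ℕ) {p : ℝ} (hp : 0 ≤ p) :
    ∫ r in Ioc (0:ℝ) 1, phi k p r ≤ 1 / ((k : ℝ) + 1) := by
  have h1 : ∫ r in Ioc (0:ℝ) 1, phi k p r ≤ ∫ r in Ioc (0:ℝ) 1, r ^ k :=
    setIntegral_mono_on (head_intOn k p) ((continuous_pow k).integrableOn_Ioc)
      measurableSet_Ioc fun r hr => phi_le_pow k hp hr.1.le
  have h2 : ∫ r in Ioc (0:ℝ) 1, (r:ℝ) ^ k = 1 / ((k:ℝ) + 1) := by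
    rw [← intervalIntegral.integral_of_le zero_le_one, integral_pow]
    norm_num
  linarith

private lemma tail_intOn (k : ℕ) {p : ℝ} (hp : 0 ≤ p) (hk : (k : ℝ) - 2 * p < -1)
    {A : ℝ} (hA : 1 ≤ A) : IntegrableOn (phi k p) (Ioi A) := by
  have hA0 : (0:ℝ) < A := lt_of_lt_of_le one_pos hA
  refine Integrable.mono' (integrableOn_Ioi_rpow_of_lt hk hA0)
    ((phi_cont k p).aestronglyMeasurable.restrict) ?_
  filter_upwards [ae_restrict_mem measurableSet_Ioi] with r hr
  have hr1 : (1:ℝ) ≤ r := hA.trans (le_of_lt hr)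
  rw [Real.norm_eq_abs, abs_of_nonneg (phi_nonneg k p (by linarith))]
  exact phi_le_rpow k hp hr1

private lemma tail_bound (k : ℕ) {p : ℝ} (hp : 0 ≤ p) (hk : (k : ℝ) - 2 * p < -1)
    {A : ℝ} (hA : 1 ≤ A) :
    ∫ r in Ioi A, phi k p r ≤ A ^ ((k : ℝ) + 1 - 2 * p) / (2 * p - (k : ℝ) - 1) := by
  have hA0 : (0:ℝ) < A := lt_of_lt_of_le one_pos hA
  have h1 : ∫ r in Ioi A, phi k p r ≤ ∫ r in Ioi A, r ^ ((k:ℝ) - 2*p) :=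
    setIntegral_mono_on (tail_intOn k hp hk hA) (integrableOn_Ioi_rpow_of_lt hk hA0)
      measurableSet_Ioi fun r hr => phi_le_rpow k hp (hA.trans hr.le)
  rw [integral_Ioi_rpow_of_lt hk hA0] at h1
  have he : (k:ℝ) - 2*p + 1 = (k:ℝ) + 1 - 2*p := by ring
  rw [he] at h1
  have h3 : -A ^ ((k:ℝ)+1-2*p) / ((k:ℝ)+1-2*p) = A ^ ((k:ℝ)+1-2*p) / (2*p-(k:ℝ)-1) := by
    rw [neg_div, ← div_neg]
    congr 1
    ring
  rw [h3] at h1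
  exact h1





private lemma total_intOn (k : ℕ) {p : ℝ} (hp : 0 ≤ p) (hk : (k : ℝ) - 2 * p < -1) :
    IntegrableOn (phi k p) (Ioi (0:ℝ)) := by
  rw [← Ioc_union_Ioi_eq_Ioi (zero_le_one (α := ℝ))]
  exact (head_intOn k p).union (tail_intOn k hp hk le_rfl)

private lemma total_bound (k : ℕ) {p : ℝ} (hp : 0 ≤ p) (hk : (k : ℝ) - 2 * p < -1) :
    ∫ r in Ioi (0:ℝ), phi k p r ≤ 1 / ((k:ℝ) + 1) + 1 / (2 * p - (k:ℝ) - 1) := by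
  rw [← Ioc_union_Ioi_eq_Ioi (zero_le_one (α := ℝ)),
    setIntegral_union (Ioc_disjoint_Ioi le_rfl) measurableSet_Ioi (head_intOn k p)
      (tail_intOn k hp hk le_rfl)]
  have h2 := tail_bound k hp hk (le_refl (1:ℝ))
  rw [Real.one_rpow] at h2
  have h1 := head_bound k hp
  linarith

/-- tail over `Ici A`. -/
private lemma tail_intOn_Ici (k : ℕ) {p : ℝ} (hp : 0 ≤ p) (hk : (k : ℝ) - 2 * p < -1)
    {A : ℝ} (hA : 1 ≤ A) : IntegrableOn (phi k p) (Ici A) := by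
  rw [integrableOn_Ici_iff_integrableOn_Ioi]
  exact tail_intOn k hp hk hA

private lemma tail_bound_Ici (k : ℕ) {p : ℝ} (hp : 0 ≤ p) (hk : (k : ℝ) - 2 * p < -1)
    {A : ℝ} (hA : 1 ≤ A) :
    ∫ r in Ici A, phi k p r ≤ A ^ ((k : ℝ) + 1 - 2 * p) / (2 * p - (k : ℝ) - 1) := by
  rw [integral_Ici_eq_integral_Ioi]
  exact tail_bound k hp hk hA

private lemma mid_intOn (k : ℕ) (p : ℝ) {A : ℝ} :
    IntegrableOn (phi k p) (Ioo (1:ℝ) A) :=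
  ((phi_cont k p).integrableOn_Ioc).mono_set Ioo_subset_Ioc_self

/-- case (ii): logarithmic bound on the middle piece. -/
private lemma mid_bound_log (k : ℕ) {p : ℝ} (hp : 0 ≤ p) (hkp : (k:ℝ) - 2 * p = -1)
    {A : ℝ} (hA : 1 ≤ A) :
    ∫ r in Ioo (1:ℝ) A, phi k p r ≤ Real.log A := by
  have h0 : (0:ℝ) ∉ uIcc (1:ℝ) A := by
    rw [uIcc_of_le hA]
    rintro ⟨h, -⟩; linarith
  have hint : IntegrableOn (fun r : ℝ => r⁻¹) (Ioo (1:ℝ) A) :=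
    ((intervalIntegral.intervalIntegrable_inv (μ := volume)
      (fun x hx => by rw [uIcc_of_le hA] at hx; exact ne_of_gt (by linarith [hx.1]))
      (continuousOn_id' _)).1).mono_set Ioo_subset_Ioc_self
  have h1 : ∫ r in Ioo (1:ℝ) A, phi k p r ≤ ∫ r in Ioo (1:ℝ) A, r⁻¹ := by
    refine setIntegral_mono_on (mid_intOn k p) hint measurableSet_Ioo fun r hr => ?_
    have := phi_le_rpow k hp (le_of_lt hr.1)
    rwa [hkp, Real.rpow_neg_one] at this
  have h2 : ∫ r in Ioo (1:ℝ) A, (r:ℝ)⁻¹ = Real.log A := by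
    rw [← integral_Ioc_eq_integral_Ioo, ← intervalIntegral.integral_of_le hA,
      integral_inv h0, div_one]
  linarith

/-- case (iii): power bound on the middle piece. -/
private lemma mid_bound_rpow (k : ℕ) {p : ℝ} (hp : 0 ≤ p) (hkp : -1 < (k:ℝ) - 2 * p)
    {A : ℝ} (hA : 1 ≤ A) :
    ∫ r in Ioo (1:ℝ) A, phi k p r ≤ A ^ ((k:ℝ) + 1 - 2*p) / ((k:ℝ) + 1 - 2*p) := by
  have hq : (0:ℝ) < (k:ℝ) + 1 - 2*p := by linarith
  have hint : IntegrableOn (fun r : ℝ => r ^ ((k:ℝ) - 2*p)) (Ioo (1:ℝ) A) := by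
    refine IntegrableOn.mono_set ?_ Ioo_subset_Ioc_self
    refine (intervalIntegral.intervalIntegrable_rpow (μ := volume) (Or.inr ?_)).1
    rw [uIcc_of_le hA]; rintro ⟨h, -⟩; linarith
  have h1 : ∫ r in Ioo (1:ℝ) A, phi k p r ≤ ∫ r in Ioo (1:ℝ) A, r ^ ((k:ℝ) - 2*p) :=
    setIntegral_mono_on (mid_intOn k p) hint measurableSet_Ioo
      fun r hr => phi_le_rpow k hp (le_of_lt hr.1)
  have h2 : ∫ r in Ioo (1:ℝ) A, (r:ℝ) ^ ((k:ℝ) - 2*p)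
      = (A ^ ((k:ℝ) - 2*p + 1) - 1) / ((k:ℝ) - 2*p + 1) := by
    rw [← integral_Ioc_eq_integral_Ioo, ← intervalIntegral.integral_of_le hA,
      integral_rpow (Or.inl hkp)]
    rw [Real.one_rpow]
  have hA' : (0:ℝ) ≤ A ^ ((k:ℝ) - 2*p + 1) := Real.rpow_nonneg (by linarith) _
  have he : (k:ℝ) - 2*p + 1 = (k:ℝ) + 1 - 2*p := by ring
  rw [he] at h2 hA'
  rw [h2] at h1
  have : (A ^ ((k:ℝ)+1-2*p) - 1) / ((k:ℝ)+1-2*p) ≤ A ^ ((k:ℝ)+1-2*p) / ((k:ℝ)+1-2*p) := by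
    gcongr
    linarith
  linarith

/-- assembling the `J` bound: integral over `Ioo 0 A`. -/
private lemma J_bound (k : ℕ) {p : ℝ} (hp : 0 ≤ p) {A : ℝ} (hA : 1 ≤ A) {M : ℝ}
    (hM : ∫ r in Ioo (1:ℝ) A, phi k p r ≤ M) :
    ∫ r in Ioo (0:ℝ) A, phi k p r ≤ 1 / ((k:ℝ) + 1) + M := by
  have hdisj : Disjoint (Ioc (0:ℝ) 1) (Ioo (1:ℝ) A) :=
    Set.disjoint_left.2 fun r h1 h2 => absurd h1.2 (not_le.2 h2.1)
  have hunion : IntegrableOn (phi k p) (Ioc (0:ℝ) 1 ∪ Ioo 1 A) :=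
    (head_intOn k p).union (mid_intOn k p)
  have hsub : Ioo (0:ℝ) A ⊆ Ioc 0 1 ∪ Ioo 1 A := by
    intro r hr
    rcases le_or_gt r 1 with h | h
    · exact Or.inl ⟨hr.1, h⟩
    · exact Or.inr ⟨h, hr.2⟩
  have h1 : ∫ r in Ioo (0:ℝ) A, phi k p r ≤ ∫ r in Ioc (0:ℝ) 1 ∪ Ioo 1 A, phi k p r := by
    refine setIntegral_mono_set hunion ?_ (HasSubset.Subset.eventuallyLE hsub)
    filter_upwards [ae_restrict_mem (measurableSet_Ioc.union measurableSet_Ioo)] with r hr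
    rcases hr with h | h
    · exact phi_nonneg k p h.1.le
    · exact phi_nonneg k p (by linarith [h.1])
  rw [setIntegral_union hdisj measurableSet_Ioo (head_intOn k p) (mid_intOn k p)] at h1
  have := head_bound k hp
  linarith



variable {d : ℕ}

private lemma ntr (hd : 0 < d) : Nontrivial (EuclideanSpace ℝ (Fin d)) :=
  Module.nontrivial_of_finrank_pos (R := ℝ)
    (by rw [finrank_euclideanSpace_fin]; exact hd)

/-- radial integration formula specialized to `EuclideanSpace ℝ (Fin d)` -/
private lemma polar (hd : 0 < d) (g : ℝ → ℝ) :
    ∫ x : EuclideanSpace ℝ (Fin d), g ‖x‖ =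
      ((d : ℝ) * (volume (Metric.ball (0 : EuclideanSpace ℝ (Fin d)) 1)).toReal) *
        ∫ r in Ioi (0:ℝ), r ^ (d - 1) * g r := by
  haveI := ntr hd
  have h := MeasureTheory.integral_fun_norm_addHaar
    (volume : Measure (EuclideanSpace ℝ (Fin d))) g
  simp only [finrank_euclideanSpace_fin, smul_eq_mul, nsmul_eq_mul] at h
  rw [h, ← mul_assoc]
  rfl

private lemma polar_ball (hd : 0 < d) (g : ℝ → ℝ) {A : ℝ} (hA : 0 < A) :
    ∫ x in Metric.ball (0 : EuclideanSpace ℝ (Fin d)) A, g ‖x‖ =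
      ((d : ℝ) * (volume (Metric.ball (0 : EuclideanSpace ℝ (Fin d)) 1)).toReal) *
        ∫ r in Ioo (0:ℝ) A, r ^ (d - 1) * g r := by
  have h1 : ∫ x in Metric.ball (0 : EuclideanSpace ℝ (Fin d)) A, g ‖x‖ =
      ∫ x : EuclideanSpace ℝ (Fin d), (Set.indicator (Iio A) g) ‖x‖ := by
    rw [← integral_indicator measurableSet_ball]
    congr 1
    ext x
    by_cases h : ‖x‖ < A
    · simp [Set.indicator, h, Metric.mem_ball, mem_ball_zero_iff]
    · simp [Set.indicator, h, Metric.mem_ball, mem_ball_zero_iff]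
  rw [h1, polar hd]
  congr 1
  have h2 : ∀ r : ℝ, r ^ (d-1) * (Set.indicator (Iio A) g) r
      = Set.indicator (Iio A) (fun r => r ^ (d-1) * g r) r := by
    intro r
    by_cases h : r ∈ Iio A
    · simp [Set.indicator, h]
    · simp [Set.indicator, h]
  simp_rw [h2]
  rw [integral_indicator measurableSet_Iio, Measure.restrict_restrict measurableSet_Iio,
    Iio_inter_Ioi]

private lemma polar_compl (hd : 0 < d) (g : ℝ → ℝ) {A : ℝ} (hA : 0 < A) :
    ∫ x in (Metric.ball (0 : EuclideanSpace ℝ (Fin d)) A)ᶜ, g ‖x‖ =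
      ((d : ℝ) * (volume (Metric.ball (0 : EuclideanSpace ℝ (Fin d)) 1)).toReal) *
        ∫ r in Ici A, r ^ (d - 1) * g r := by
  have h1 : ∫ x in (Metric.ball (0 : EuclideanSpace ℝ (Fin d)) A)ᶜ, g ‖x‖ =
      ∫ x : EuclideanSpace ℝ (Fin d), (Set.indicator (Ici A) g) ‖x‖ := by
    rw [← integral_indicator measurableSet_ball.compl]
    congr 1
    ext x
    by_cases h : A ≤ ‖x‖
    · simp [Set.indicator, h, Metric.mem_ball, mem_ball_zero_iff, not_lt.2 h]
    · simp [Set.indicator, h, Metric.mem_ball, mem_ball_zero_iff, not_le.1 h]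
  rw [h1, polar hd]
  congr 1
  have h2 : ∀ r : ℝ, r ^ (d-1) * (Set.indicator (Ici A) g) r
      = Set.indicator (Ici A) (fun r => r ^ (d-1) * g r) r := by
    intro r
    by_cases h : r ∈ Ici A
    · simp [Set.indicator, h]
    · simp [Set.indicator, h]
  simp_rw [h2]
  rw [integral_indicator measurableSet_Ici, Measure.restrict_restrict measurableSet_Ici]
  congr 2
  rw [inter_eq_left]
  exact fun r hr => lt_of_lt_of_le hA hr





lemma polar_phi {d : ℕ} (hd : 0 < d) (p : ℝ) :
    ∫ x : EuclideanSpace ℝ (Fin d), (1 + ‖x‖^2 : ℝ) ^ (-p) =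
      ((d : ℝ) * (volume (Metric.ball (0 : EuclideanSpace ℝ (Fin d)) 1)).toReal) *
        ∫ r in Ioi (0:ℝ), phi (d-1) p r :=
  polar hd (fun r : ℝ => (1 + r^2) ^ (-p))

lemma polar_ball_phi {d : ℕ} (hd : 0 < d) (p : ℝ) {A : ℝ} (hA : 0 < A) :
    ∫ x in Metric.ball (0 : EuclideanSpace ℝ (Fin d)) A, (‖x‖^2 * (1 + ‖x‖^2 : ℝ) ^ (-p)) =
      ((d : ℝ) * (volume (Metric.ball (0 : EuclideanSpace ℝ (Fin d)) 1)).toReal) *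
        ∫ r in Ioo (0:ℝ) A, phi (d+1) p r := by
  have h1 := polar_ball hd (fun r : ℝ => r^2 * (1 + r^2) ^ (-p)) hA
  rw [h1]
  congr 1
  apply setIntegral_congr_fun measurableSet_Ioo
  intro r _
  show r ^ (d-1) * (r^2 * (1+r^2)^(-p)) = phi (d+1) p r
  unfold phi
  rw [← mul_assoc, ← pow_add]
  congr 2
  omega

lemma polar_compl_phi {d : ℕ} (hd : 0 < d) (p : ℝ) {A : ℝ} (hA : 0 < A) :
    ∫ x in (Metric.ball (0 : EuclideanSpace ℝ (Fin d)) A)ᶜ, (1 + ‖x‖^2 : ℝ) ^ (-p) =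
      ((d : ℝ) * (volume (Metric.ball (0 : EuclideanSpace ℝ (Fin d)) 1)).toReal) *
        ∫ r in Ici A, phi (d-1) p r :=
  polar_compl hd (fun r : ℝ => (1 + r^2) ^ (-p)) hA

lemma cos_quad {θ : ℝ} : 2 - 2 * Real.cos θ ≤ θ ^ 2 := by
  nlinarith [Real.one_sub_sq_div_two_le_cos (x := θ)]

lemma cos_four {θ : ℝ} : 2 - 2 * Real.cos θ ≤ 4 := by
  nlinarith [Real.neg_one_le_cos θ]

lemma cos_nn {θ : ℝ} : 0 ≤ 2 - 2 * Real.cos θ := by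
  nlinarith [Real.cos_le_one θ]


end Stmt19Aux


open Stmt19Aux

set_option maxHeartbeats 2000000

/-- for a centered stationary field with spectral density
`v(t) ≤ B/(1+|t|²)^p`, `p > d/2`, the intrinsic pseudometric
`d_X(t₁,t₂)² = ∫ |e^{i⟨t₁−t₂,s⟩} − 1|² v(s) ds = ∫ (2 − 2cos⟨t₁−t₂,s⟩) v(s) ds` obeys
(i) `d_X ≤ C|t₁−t₂|` if `2p > d+2`; (ii) `d_X² ≤ C|t₁−t₂|²(log(1/|t₁−t₂|) ∨ 1)` if
`2p = d+2`; (iii) `d_X² ≤ C|t₁−t₂|^{2p−d}` if `d < 2p < d+2`; and `∫ v ≤ C'`. -/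
theorem stmt19 (d : ℕ) (hd : 0 < d) (p B : ℝ) (hp : (d : ℝ) / 2 < p) (hB : 0 < B) :
    ∃ C C' : ℝ, 0 < C ∧ 0 < C' ∧
      ∀ v : EuclideanSpace ℝ (Fin d) → ℝ,
        Measurable v → (∀ t, 0 ≤ v t) →
        (∀ t, v t ≤ B / (1 + ‖t‖ ^ 2) ^ p) →
        (∀ t₁ t₂ : EuclideanSpace ℝ (Fin d),
          ((d : ℝ) + 2 < 2 * p →
            Real.sqrt (∫ s, (2 - 2 * Real.cos (⟪t₁ - t₂, s⟫ : ℝ)) * v s) ≤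
              C * ‖t₁ - t₂‖) ∧
          (2 * p = (d : ℝ) + 2 →
            (∫ s, (2 - 2 * Real.cos (⟪t₁ - t₂, s⟫ : ℝ)) * v s) ≤
              C * ‖t₁ - t₂‖ ^ 2 * max (Real.log (1 / ‖t₁ - t₂‖)) 1) ∧
          ((d : ℝ) < 2 * p → 2 * p < (d : ℝ) + 2 →
            (∫ s, (2 - 2 * Real.cos (⟪t₁ - t₂, s⟫ : ℝ)) * v s) ≤
              C * ‖t₁ - t₂‖ ^ (2 * p - (d : ℝ)))) ∧
        (∫ s, v s) ≤ C' := by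
  have hd1 : (1:ℝ) ≤ (d:ℝ) := by exact_mod_cast hd
  have hp0 : (0:ℝ) ≤ p := by linarith
  have h2pd : (d:ℝ) < 2 * p := by linarith
  have hcast : ((d-1:ℕ):ℝ) = (d:ℝ) - 1 := by
    have h1 : (1:ℕ) ≤ d := hd
    push_cast [h1]
    ring
  have hcast2 : ((d+1:ℕ):ℝ) = (d:ℝ) + 1 := by push_cast; ring
  set c : ℝ := (d : ℝ) * (volume (Metric.ball (0 : EuclideanSpace ℝ (Fin d)) 1)).toReal
    with hcdef
  have hc : 0 < c := by
    apply mul_pos (by exact_mod_cast hd)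
    exact ENNReal.toReal_pos (Metric.measure_ball_pos volume _ one_pos).ne' measure_ball_lt_top.ne
  set K1 : ℝ := B * c * (1/(d:ℝ) + 1/(2*p-(d:ℝ))) with hK1def
  have hK1 : 0 < K1 := by
    apply mul_pos (mul_pos hB hc)
    have h1 : (0:ℝ) < 1/(d:ℝ) := by positivity
    have h2 : (0:ℝ) < 1/(2*p-(d:ℝ)) := by apply div_pos one_pos; linarith
    linarith
  set Q : ℝ := B * c * (1/((d:ℝ)+2) + |1/(2*p-(d:ℝ)-2)| + 4/(2*p-(d:ℝ))) with hQdef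
  have hQ0 : 0 ≤ Q := by
    apply mul_nonneg (by positivity)
    have h1 : (0:ℝ) ≤ 1/((d:ℝ)+2) := by positivity
    have h2 : (0:ℝ) ≤ |1/(2*p-(d:ℝ)-2)| := abs_nonneg _
    have h3 : (0:ℝ) ≤ 4/(2*p-(d:ℝ)) := by apply div_nonneg (by norm_num); linarith
    linarith
  have hBc : 0 < B * c := mul_pos hB hc
  set C : ℝ := 1 + 4*K1 + 4*(B*c) + Q + Real.sqrt (Q + 4*K1) with hCdef
  have hC : 0 < C := by
    have := Real.sqrt_nonneg (Q + 4*K1)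
    rw [hCdef]; linarith
  refine ⟨C, K1, hC, hK1, ?_⟩
  intro v hv_meas hv0 hv_le
  -- majorant facts
  have hWc : Continuous (fun x : EuclideanSpace ℝ (Fin d) => (1 + ‖x‖^2 : ℝ) ^ (-p)) :=
    Continuous.rpow_const (by continuity) (fun x => Or.inl (by positivity))
  have hWint : Integrable (fun x : EuclideanSpace ℝ (Fin d) => (1 + ‖x‖^2 : ℝ) ^ (-p)) := by
    have h2p : (Module.finrank ℝ (EuclideanSpace ℝ (Fin d)) : ℝ) < 2*p := by
      rw [finrank_euclideanSpace_fin]; exact h2pd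
    have h0 := integrable_rpow_neg_one_add_norm_sq
      (μ := (volume : Measure (EuclideanSpace ℝ (Fin d)))) h2p
    have he : -(2*p)/2 = -p := by ring
    rw [he] at h0
    exact h0
  have hvW : ∀ t, v t ≤ B * (1 + ‖t‖^2 : ℝ) ^ (-p) := by
    intro t
    have h1 : (0:ℝ) < 1 + ‖t‖^2 := by positivity
    have h2 : B / (1 + ‖t‖^2) ^ p = B * (1 + ‖t‖^2 : ℝ) ^ (-p) := by
      rw [Real.rpow_neg h1.le, div_eq_mul_inv]
    rw [← h2]
    exact hv_le t
  have hv_int : Integrable v := by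
    refine (hWint.const_mul B).mono' hv_meas.aestronglyMeasurable ?_
    filter_upwards with t
    rw [Real.norm_eq_abs, abs_of_nonneg (hv0 t)]
    exact hvW t
  -- radial integral of the majorant
  have hk1 : ((d-1:ℕ):ℝ) - 2*p < -1 := by rw [hcast]; linarith
  have hphi1 : ∫ r in Ioi (0:ℝ), phi (d-1) p r ≤ 1/(d:ℝ) + 1/(2*p-(d:ℝ)) := by
    have h0 := total_bound (d-1) hp0 hk1
    rw [hcast, show ((d:ℝ)-1)+1 = (d:ℝ) by ring,
      show 2*p-((d:ℝ)-1)-1 = 2*p-(d:ℝ) by ring] at h0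
    exact h0
  have hIv : ∫ s, v s ≤ K1 := by
    calc ∫ s, v s ≤ ∫ s, B * (1 + ‖s‖^2 : ℝ) ^ (-p) :=
          integral_mono_of_nonneg (.of_forall hv0) (hWint.const_mul B) (.of_forall hvW)
      _ = B * (c * ∫ r in Ioi (0:ℝ), phi (d-1) p r) := by
          rw [integral_const_mul, polar_phi hd p]
      _ ≤ B * (c * (1/(d:ℝ) + 1/(2*p-(d:ℝ)))) := by gcongr
      _ = K1 := by rw [hK1def]; ring
  refine ⟨?_, hIv⟩
  intro t₁ t₂
  set h : EuclideanSpace ℝ (Fin d) := t₁ - t₂ with hhdef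
  -- integrability of the integrand
  have hinner : Continuous fun s : EuclideanSpace ℝ (Fin d) => (⟪h, s⟫ : ℝ) :=
    continuous_const.inner continuous_id
  have hcosc : Continuous fun s : EuclideanSpace ℝ (Fin d) => (2:ℝ) - 2 * Real.cos ⟪h, s⟫ :=
    continuous_const.sub (continuous_const.mul (Real.continuous_cos.comp hinner))
  have hFptw : ∀ s, (2 - 2 * Real.cos (⟪h, s⟫:ℝ)) * v s ≤ 4*B * (1 + ‖s‖^2 : ℝ) ^ (-p) := by
    intro s
    calc (2 - 2 * Real.cos (⟪h, s⟫:ℝ)) * v s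
        ≤ 4 * (B * (1 + ‖s‖^2 : ℝ) ^ (-p)) :=
          mul_le_mul cos_four (hvW s) (hv0 s) (by norm_num)
      _ = 4*B * (1 + ‖s‖^2 : ℝ) ^ (-p) := by ring
  have hFnn : ∀ s, 0 ≤ (2 - 2 * Real.cos (⟪h, s⟫:ℝ)) * v s :=
    fun s => mul_nonneg cos_nn (hv0 s)
  have hFint : Integrable (fun s => (2 - 2 * Real.cos (⟪h, s⟫:ℝ)) * v s) := by
    refine (hWint.const_mul (4*B)).mono'
      ((hcosc.measurable.mul hv_meas).aestronglyMeasurable) ?_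
    filter_upwards with s
    rw [Real.norm_eq_abs, abs_of_nonneg (hFnn s)]
    exact hFptw s
  have hI0 : 0 ≤ ∫ s, (2 - 2 * Real.cos (⟪h, s⟫:ℝ)) * v s := integral_nonneg hFnn
  have hItriv : ∫ s, (2 - 2 * Real.cos (⟪h, s⟫:ℝ)) * v s ≤ 4 * K1 := by
    calc ∫ s, (2 - 2 * Real.cos (⟪h, s⟫:ℝ)) * v s
        ≤ ∫ s, 4*B * (1 + ‖s‖^2 : ℝ) ^ (-p) :=
          integral_mono_of_nonneg (.of_forall hFnn) (hWint.const_mul (4*B)) (.of_forall hFptw)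
      _ = 4*B * (c * ∫ r in Ioi (0:ℝ), phi (d-1) p r) := by
          rw [integral_const_mul, polar_phi hd p]
      _ ≤ 4*B * (c * (1/(d:ℝ) + 1/(2*p-(d:ℝ)))) := by gcongr
      _ = 4 * K1 := by rw [hK1def]; ring
  have hIzero : ‖h‖ = 0 → ∫ s, (2 - 2 * Real.cos (⟪h, s⟫:ℝ)) * v s = 0 := by
    intro h0
    have hz : h = 0 := norm_eq_zero.mp h0
    have : ∀ s, (2 - 2 * Real.cos (⟪h, s⟫:ℝ)) * v s = 0 := by
      intro s; rw [hz]; simp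
    simp only [this, integral_zero]
  -- the main splitting estimate
  have hmaster : ∀ A : ℝ, 1 ≤ A →
      ∫ s, (2 - 2 * Real.cos (⟪h, s⟫:ℝ)) * v s ≤
        B*‖h‖^2*(c * ∫ r in Ioo (0:ℝ) A, phi (d+1) p r)
          + 4*B*(c * ∫ r in Ici A, phi (d-1) p r) := by
    intro A hA1
    have hA0 : (0:ℝ) < A := lt_of_lt_of_le one_pos hA1
    have hball : ∫ s in Metric.ball (0 : EuclideanSpace ℝ (Fin d)) A,
        (2 - 2 * Real.cos (⟪h, s⟫:ℝ)) * v s ≤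
          B*‖h‖^2*(c * ∫ r in Ioo (0:ℝ) A, phi (d+1) p r) := by
      have hGc : Continuous fun s : EuclideanSpace ℝ (Fin d) =>
          B*‖h‖^2 * (‖s‖^2 * (1 + ‖s‖^2 : ℝ) ^ (-p)) :=
        continuous_const.mul ((continuous_norm.pow 2).mul hWc)
      have hGint : IntegrableOn (fun s : EuclideanSpace ℝ (Fin d) =>
          B*‖h‖^2 * (‖s‖^2 * (1 + ‖s‖^2 : ℝ) ^ (-p)))
          (Metric.ball (0 : EuclideanSpace ℝ (Fin d)) A) :=
        (hGc.locallyIntegrable.integrableOn_isCompact (isCompact_closedBall _ _)).mono_set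
          Metric.ball_subset_closedBall
      have hmono : ∫ s in Metric.ball (0 : EuclideanSpace ℝ (Fin d)) A,
          (2 - 2 * Real.cos (⟪h, s⟫:ℝ)) * v s ≤
          ∫ s in Metric.ball (0 : EuclideanSpace ℝ (Fin d)) A,
            B*‖h‖^2 * (‖s‖^2 * (1 + ‖s‖^2 : ℝ) ^ (-p)) := by
        refine setIntegral_mono_on hFint.integrableOn hGint measurableSet_ball ?_
        intro s _
        have h1 : (2 - 2 * Real.cos (⟪h, s⟫:ℝ)) ≤ ⟪h, s⟫^2 := cos_quad
        have h2 : (⟪h, s⟫:ℝ)^2 ≤ (‖h‖*‖s‖)^2 := by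
          rw [← sq_abs]
          exact pow_le_pow_left₀ (abs_nonneg _) (abs_real_inner_le_norm h s) 2
        calc (2 - 2 * Real.cos (⟪h, s⟫:ℝ)) * v s
            ≤ (⟪h, s⟫:ℝ)^2 * v s := mul_le_mul_of_nonneg_right h1 (hv0 s)
          _ ≤ (‖h‖*‖s‖)^2 * (B * (1 + ‖s‖^2 : ℝ) ^ (-p)) :=
              mul_le_mul h2 (hvW s) (hv0 s) (by positivity)
          _ = B*‖h‖^2 * (‖s‖^2 * (1 + ‖s‖^2 : ℝ) ^ (-p)) := by ring
      calc ∫ s in Metric.ball (0 : EuclideanSpace ℝ (Fin d)) A,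
            (2 - 2 * Real.cos (⟪h, s⟫:ℝ)) * v s
          ≤ ∫ s in Metric.ball (0 : EuclideanSpace ℝ (Fin d)) A,
            B*‖h‖^2 * (‖s‖^2 * (1 + ‖s‖^2 : ℝ) ^ (-p)) := hmono
        _ = B*‖h‖^2 * ∫ s in Metric.ball (0 : EuclideanSpace ℝ (Fin d)) A,
            (‖s‖^2 * (1 + ‖s‖^2 : ℝ) ^ (-p)) := integral_const_mul _ _
        _ = B*‖h‖^2*(c * ∫ r in Ioo (0:ℝ) A, phi (d+1) p r) := by
            rw [polar_ball_phi hd p hA0]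
    have hcompl : ∫ s in (Metric.ball (0 : EuclideanSpace ℝ (Fin d)) A)ᶜ,
        (2 - 2 * Real.cos (⟪h, s⟫:ℝ)) * v s ≤
          4*B*(c * ∫ r in Ici A, phi (d-1) p r) := by
      calc ∫ s in (Metric.ball (0 : EuclideanSpace ℝ (Fin d)) A)ᶜ,
            (2 - 2 * Real.cos (⟪h, s⟫:ℝ)) * v s
          ≤ ∫ s in (Metric.ball (0 : EuclideanSpace ℝ (Fin d)) A)ᶜ,
            4*B * (1 + ‖s‖^2 : ℝ) ^ (-p) :=
            setIntegral_mono_on hFint.integrableOn ((hWint.const_mul (4*B)).integrableOn)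
              measurableSet_ball.compl (fun s _ => hFptw s)
        _ = 4*B * ∫ s in (Metric.ball (0 : EuclideanSpace ℝ (Fin d)) A)ᶜ,
            (1 + ‖s‖^2 : ℝ) ^ (-p) := integral_const_mul _ _
        _ = 4*B*(c * ∫ r in Ici A, phi (d-1) p r) := by
            rw [polar_compl_phi hd p hA0]
    calc ∫ s, (2 - 2 * Real.cos (⟪h, s⟫:ℝ)) * v s
        = (∫ s in Metric.ball (0 : EuclideanSpace ℝ (Fin d)) A,
            (2 - 2 * Real.cos (⟪h, s⟫:ℝ)) * v s)
          + ∫ s in (Metric.ball (0 : EuclideanSpace ℝ (Fin d)) A)ᶜ,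
            (2 - 2 * Real.cos (⟪h, s⟫:ℝ)) * v s :=
          (integral_add_compl measurableSet_ball hFint).symm
      _ ≤ _ := add_le_add hball hcompl
  -- the tail estimate, for 0 < ‖h‖ ≤ 1
  have hKtail : 0 < ‖h‖ → ‖h‖ ≤ 1 →
      ∫ r in Ici ‖h‖⁻¹, phi (d-1) p r ≤ ‖h‖^(2*p-(d:ℝ)) / (2*p-(d:ℝ)) := by
    intro h0 hle
    have hA1 : 1 ≤ ‖h‖⁻¹ := (one_le_inv₀ h0).2 hle
    have h1 := tail_bound_Ici (d-1) hp0 hk1 hA1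
    rw [hcast, show (d:ℝ)-1+1-2*p = (d:ℝ)-2*p by ring,
      show 2*p-((d:ℝ)-1)-1 = 2*p-(d:ℝ) by ring] at h1
    have eA : (‖h‖⁻¹) ^ ((d:ℝ)-2*p) = ‖h‖^(2*p-(d:ℝ)) := by
      rw [Real.inv_rpow (norm_nonneg _), ← Real.rpow_neg (norm_nonneg _)]
      congr 1; ring
    rw [eA] at h1
    exact h1
  refine ⟨?_, ?_, ?_⟩
  -- Case (i): 2p > d + 2
  · intro hi
    have hki : ((d+1:ℕ):ℝ) - 2*p < -1 := by rw [hcast2]; linarith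
    have key : ∫ s, (2 - 2 * Real.cos (⟪h, s⟫:ℝ)) * v s ≤ (Q + 4*K1) * ‖h‖^2 := by
      by_cases h0 : ‖h‖ = 0
      · rw [hIzero h0, h0]
        norm_num
      · have hpos : 0 < ‖h‖ := (norm_nonneg h).lt_of_ne' h0
        rcases le_or_gt ‖h‖ 1 with hle | hgt
        · -- small increment: split at A = ‖h‖⁻¹
          have hA1 : 1 ≤ ‖h‖⁻¹ := (one_le_inv₀ hpos).2 hle
          have hJ : ∫ r in Ioo (0:ℝ) ‖h‖⁻¹, phi (d+1) p r ≤
              1/((d:ℝ)+2) + 1/(2*p-(d:ℝ)-2) := by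
            have hsub : ∫ r in Ioo (0:ℝ) ‖h‖⁻¹, phi (d+1) p r ≤
                ∫ r in Ioi (0:ℝ), phi (d+1) p r := by
              refine setIntegral_mono_set (total_intOn (d+1) hp0 hki) ?_
                (HasSubset.Subset.eventuallyLE Ioo_subset_Ioi_self)
              filter_upwards [ae_restrict_mem measurableSet_Ioi] with r hr
              exact phi_nonneg _ _ (le_of_lt hr)
            have h2 := total_bound (d+1) hp0 hki
            rw [hcast2, show (d:ℝ)+1+1 = (d:ℝ)+2 by ring,
              show 2*p-((d:ℝ)+1)-1 = 2*p-(d:ℝ)-2 by ring] at h2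
            linarith
          have hK := hKtail hpos hle
          have hmono : ‖h‖^(2*p-(d:ℝ)) ≤ ‖h‖^2 := by
            calc ‖h‖^(2*p-(d:ℝ)) ≤ ‖h‖^((2:ℕ):ℝ) :=
                  Real.rpow_le_rpow_of_exponent_ge hpos hle (by push_cast; linarith)
              _ = ‖h‖^2 := Real.rpow_natCast _ 2
          calc ∫ s, (2 - 2 * Real.cos (⟪h, s⟫:ℝ)) * v s
              ≤ B*‖h‖^2*(c * ∫ r in Ioo (0:ℝ) ‖h‖⁻¹, phi (d+1) p r)
                + 4*B*(c * ∫ r in Ici ‖h‖⁻¹, phi (d-1) p r) := hmaster _ hA1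
            _ ≤ B*‖h‖^2*(c * (1/((d:ℝ)+2) + 1/(2*p-(d:ℝ)-2)))
                + 4*B*(c * (‖h‖^(2*p-(d:ℝ)) / (2*p-(d:ℝ)))) := by gcongr
            _ ≤ B*‖h‖^2*(c * (1/((d:ℝ)+2) + 1/(2*p-(d:ℝ)-2)))
                + 4*B*(c * (‖h‖^2 / (2*p-(d:ℝ)))) := by
                gcongr
            _ = (B*c*(1/((d:ℝ)+2) + 1/(2*p-(d:ℝ)-2) + 4/(2*p-(d:ℝ)))) * ‖h‖^2 := by
                ring
            _ ≤ (Q + 4*K1) * ‖h‖^2 := by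
                have habs : |1/(2*p-(d:ℝ)-2)| = 1/(2*p-(d:ℝ)-2) :=
                  abs_of_pos (div_pos one_pos (by linarith))
                have hle2 : B*c*(1/((d:ℝ)+2) + 1/(2*p-(d:ℝ)-2) + 4/(2*p-(d:ℝ))) ≤ Q + 4*K1 := by
                  rw [hQdef, habs]
                  nlinarith
                exact mul_le_mul_of_nonneg_right hle2 (by positivity)
        · -- large increment: trivial bound
          have hs1 : (1:ℝ) ≤ ‖h‖^2 := by nlinarith
          calc ∫ s, (2 - 2 * Real.cos (⟪h, s⟫:ℝ)) * v s ≤ 4*K1 := hItriv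
            _ = 4*K1 * 1 := by ring
            _ ≤ (Q + 4*K1) * ‖h‖^2 := by
                apply mul_le_mul (by linarith) hs1 (by norm_num)
                linarith
    have hs1 : Real.sqrt (∫ s, (2 - 2 * Real.cos (⟪h, s⟫:ℝ)) * v s)
        ≤ Real.sqrt ((Q + 4*K1) * ‖h‖^2) := Real.sqrt_le_sqrt key
    rw [Real.sqrt_mul (by linarith) , Real.sqrt_sq (norm_nonneg _)] at hs1
    have hs2 : Real.sqrt (Q + 4*K1) ≤ C := by
      rw [hCdef]
      linarith
    exact hs1.trans (mul_le_mul_of_nonneg_right hs2 (norm_nonneg _))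
  -- Case (ii): 2p = d + 2
  · intro hii
    rw [one_div]
    have hmaxL : (1:ℝ) ≤ max (Real.log ‖h‖⁻¹) 1 := le_max_right _ _
    have hmaxL0 : (0:ℝ) < max (Real.log ‖h‖⁻¹) 1 := lt_of_lt_of_le one_pos hmaxL
    by_cases h0 : ‖h‖ = 0
    · rw [hIzero h0, h0]
      have : (0:ℝ)^2 = 0 := by norm_num
      rw [this, mul_zero, zero_mul]
    · have hpos : 0 < ‖h‖ := (norm_nonneg h).lt_of_ne' h0
      rcases le_or_gt ‖h‖ 1 with hle | hgt
      · have hA1 : 1 ≤ ‖h‖⁻¹ := (one_le_inv₀ hpos).2 hle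
        have hL0 : 0 ≤ Real.log ‖h‖⁻¹ := Real.log_nonneg hA1
        have hJ : ∫ r in Ioo (0:ℝ) ‖h‖⁻¹, phi (d+1) p r ≤
            1/((d:ℝ)+2) + Real.log ‖h‖⁻¹ := by
          have h2 := J_bound (d+1) hp0 hA1
            (mid_bound_log (d+1) hp0 (by rw [hcast2]; linarith) hA1)
          rw [hcast2, show (d:ℝ)+1+1 = (d:ℝ)+2 by ring] at h2
          exact h2
        have hK : ∫ r in Ici ‖h‖⁻¹, phi (d-1) p r ≤ ‖h‖^2 / 2 := by
          have h1 := hKtail hpos hle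
          rw [show 2*p-(d:ℝ) = 2 by linarith] at h1
          rw [show ((2:ℝ)) = (((2:ℕ)):ℝ) by norm_num, Real.rpow_natCast] at h1
          exact h1
        have hnum : 1/((d:ℝ)+2) + Real.log ‖h‖⁻¹ + 2 ≤ 4 * max (Real.log ‖h‖⁻¹) 1 := by
          have hd2 : 1/((d:ℝ)+2) ≤ 1 := by
            rw [div_le_one (by linarith)]; linarith
          have := le_max_left (Real.log ‖h‖⁻¹) 1
          linarith
        calc ∫ s, (2 - 2 * Real.cos (⟪h, s⟫:ℝ)) * v s
            ≤ B*‖h‖^2*(c * ∫ r in Ioo (0:ℝ) ‖h‖⁻¹, phi (d+1) p r)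
              + 4*B*(c * ∫ r in Ici ‖h‖⁻¹, phi (d-1) p r) := hmaster _ hA1
          _ ≤ B*‖h‖^2*(c * (1/((d:ℝ)+2) + Real.log ‖h‖⁻¹)) + 4*B*(c * (‖h‖^2/2)) := by
              gcongr
          _ = (B*c) * ‖h‖^2 * (1/((d:ℝ)+2) + Real.log ‖h‖⁻¹ + 2) := by ring
          _ ≤ (B*c) * ‖h‖^2 * (4 * max (Real.log ‖h‖⁻¹) 1) := by
              gcongr
          _ = (4*(B*c)) * (‖h‖^2 * max (Real.log ‖h‖⁻¹) 1) := by ring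
          _ ≤ C * (‖h‖^2 * max (Real.log ‖h‖⁻¹) 1) := by
              apply mul_le_mul_of_nonneg_right ?_ (by positivity)
              rw [hCdef]
              have := Real.sqrt_nonneg (Q + 4*K1)
              linarith
          _ = C * ‖h‖^2 * max (Real.log ‖h‖⁻¹) 1 := by ring
      · have hs1 : (1:ℝ) ≤ ‖h‖^2 := by nlinarith
        have hsm : (1:ℝ) ≤ ‖h‖^2 * max (Real.log ‖h‖⁻¹) 1 := by nlinarith
        calc ∫ s, (2 - 2 * Real.cos (⟪h, s⟫:ℝ)) * v s ≤ 4*K1 := hItriv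
          _ ≤ C := by
              rw [hCdef]
              have := Real.sqrt_nonneg (Q + 4*K1)
              linarith
          _ = C * 1 := (mul_one C).symm
          _ ≤ C * (‖h‖^2 * max (Real.log ‖h‖⁻¹) 1) := by
              exact mul_le_mul_of_nonneg_left hsm (le_of_lt hC)
          _ = C * ‖h‖^2 * max (Real.log ‖h‖⁻¹) 1 := by ring
  -- Case (iii): d < 2p < d + 2
  · intro hiii1 hiii2
    by_cases h0 : ‖h‖ = 0
    · rw [hIzero h0, h0, Real.zero_rpow (by intro hq; nlinarith), mul_zero]
    · have hpos : 0 < ‖h‖ := (norm_nonneg h).lt_of_ne' h0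
      have hpinn : (0:ℝ) ≤ ‖h‖^(2*p-(d:ℝ)) := Real.rpow_nonneg (norm_nonneg _) _
      rcases le_or_gt ‖h‖ 1 with hle | hgt
      · have hA1 : 1 ≤ ‖h‖⁻¹ := (one_le_inv₀ hpos).2 hle
        have he : (0:ℝ) < (d:ℝ)+2-2*p := by linarith
        have hJ : ∫ r in Ioo (0:ℝ) ‖h‖⁻¹, phi (d+1) p r ≤
            1/((d:ℝ)+2) + ‖h‖^(2*p-(d:ℝ)-2) / ((d:ℝ)+2-2*p) := by
          have h2 := J_bound (d+1) hp0 hA1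
            (mid_bound_rpow (d+1) hp0 (by rw [hcast2]; linarith) hA1)
          rw [hcast2, show (d:ℝ)+1+1 = (d:ℝ)+2 by ring] at h2
          have eA : (‖h‖⁻¹) ^ ((d:ℝ)+2-2*p) = ‖h‖^(2*p-(d:ℝ)-2) := by
            rw [Real.inv_rpow (norm_nonneg _), ← Real.rpow_neg (norm_nonneg _)]
            congr 1; ring
          rw [eA] at h2
          exact h2
        have hK := hKtail hpos hle
        have hmul : ‖h‖^2 * ‖h‖^(2*p-(d:ℝ)-2) = ‖h‖^(2*p-(d:ℝ)) := by
          rw [show (‖h‖^2 : ℝ) = ‖h‖^((2:ℕ):ℝ) from (Real.rpow_natCast _ 2).symm,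
            ← Real.rpow_add hpos]
          congr 1
          push_cast
          ring
        have hmono : ‖h‖^2 ≤ ‖h‖^(2*p-(d:ℝ)) := by
          calc ‖h‖^2 = ‖h‖^((2:ℕ):ℝ) := (Real.rpow_natCast _ 2).symm
            _ ≤ ‖h‖^(2*p-(d:ℝ)) :=
              Real.rpow_le_rpow_of_exponent_ge hpos hle (by push_cast; linarith)
        have habs : |1/(2*p-(d:ℝ)-2)| = 1/((d:ℝ)+2-2*p) := by
          rw [show 2*p-(d:ℝ)-2 = -((d:ℝ)+2-2*p) by ring, div_neg, abs_neg,
            abs_of_pos (div_pos one_pos he)]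
        calc ∫ s, (2 - 2 * Real.cos (⟪h, s⟫:ℝ)) * v s
            ≤ B*‖h‖^2*(c * ∫ r in Ioo (0:ℝ) ‖h‖⁻¹, phi (d+1) p r)
              + 4*B*(c * ∫ r in Ici ‖h‖⁻¹, phi (d-1) p r) := hmaster _ hA1
          _ ≤ B*‖h‖^2*(c * (1/((d:ℝ)+2) + ‖h‖^(2*p-(d:ℝ)-2) / ((d:ℝ)+2-2*p)))
              + 4*B*(c * (‖h‖^(2*p-(d:ℝ)) / (2*p-(d:ℝ)))) := by gcongr
          _ = B*c*((‖h‖^2)*(1/((d:ℝ)+2)))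
              + B*c*((‖h‖^2 * ‖h‖^(2*p-(d:ℝ)-2))/((d:ℝ)+2-2*p))
              + 4*B*c*(‖h‖^(2*p-(d:ℝ))/(2*p-(d:ℝ))) := by ring
          _ ≤ B*c*((‖h‖^(2*p-(d:ℝ)))*(1/((d:ℝ)+2)))
              + B*c*((‖h‖^(2*p-(d:ℝ)))/((d:ℝ)+2-2*p))
              + 4*B*c*(‖h‖^(2*p-(d:ℝ))/(2*p-(d:ℝ))) := by
              rw [hmul]
              gcongr
          _ = (B*c*(1/((d:ℝ)+2) + 1/((d:ℝ)+2-2*p) + 4/(2*p-(d:ℝ)))) * ‖h‖^(2*p-(d:ℝ)) := by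
              ring
          _ ≤ C * ‖h‖^(2*p-(d:ℝ)) := by
              apply mul_le_mul_of_nonneg_right ?_ hpinn
              have hQeq : B*c*(1/((d:ℝ)+2) + 1/((d:ℝ)+2-2*p) + 4/(2*p-(d:ℝ))) = Q := by
                rw [hQdef, habs]
              rw [hQeq, hCdef]
              have := Real.sqrt_nonneg (Q + 4*K1)
              linarith
      · have hs1 : (1:ℝ) ≤ ‖h‖^(2*p-(d:ℝ)) := by
          calc (1:ℝ) = 1^(2*p-(d:ℝ)) := (Real.one_rpow _).symm
            _ ≤ ‖h‖^(2*p-(d:ℝ)) :=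
              Real.rpow_le_rpow zero_le_one (le_of_lt hgt) (by linarith)
        calc ∫ s, (2 - 2 * Real.cos (⟪h, s⟫:ℝ)) * v s ≤ 4*K1 := hItriv
          _ ≤ C := by
              rw [hCdef]
              have := Real.sqrt_nonneg (Q + 4*K1)
              linarith
          _ = C * 1 := (mul_one C).symm
          _ ≤ C * ‖h‖^(2*p-(d:ℝ)) := mul_le_mul_of_nonneg_left hs1 (le_of_lt hC)
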